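/- With the same hierarchical model (Γ ~ Gamma(τa,1), Λ | Γ ~ N(γ̄a + μΓ, σ²Γ)), the conditional expectations satisfy the algebraic identity E[Γ^{−1} | Λ = λ] = ((μ² + 2σ²) E[Γ | Λ = λ] − σ²(2τa − 1)) / (λ − γ̄a)² for λ ≠ γ̄a, provided τa > 3/2 (so that E[Γ^{−1}|Λ] is finite). -/

import Mathlib

open MeasureTheory Real Set
open Filter

/-- Joint density of `(Λ, Γ)` at `(λ, g)` in the hierarchical model
`Γ ~ Gamma(τa, 1)`, `Λ | Γ = g ~ N(γ̄a + μg, σ²g)`. -/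
noncomputable def jointDensity (τ a γbar μ σ lam g : ℝ) : ℝ :=
  Real.exp (-(lam - γbar * a - μ * g) ^ 2 / (2 * σ ^ 2 * g)) /
      Real.sqrt (2 * π * σ ^ 2 * g) *
    (g ^ (τ * a - 1) * Real.exp (-g) / Real.Gamma (τ * a))

/-- The conditional expectation `E[Γ | Λ = λ]`. -/
noncomputable def condMeanGamma (τ a γbar μ σ lam : ℝ) : ℝ :=
  (∫ g in Ioi (0 : ℝ), g * jointDensity τ a γbar μ σ lam g) /
    ∫ g in Ioi (0 : ℝ), jointDensity τ a γbar μ σ lam g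

/-- The conditional expectation `E[Γ⁻¹ | Λ = λ]`. -/
noncomputable def condMeanGammaInv (τ a γbar μ σ lam : ℝ) : ℝ :=
  (∫ g in Ioi (0 : ℝ), g⁻¹ * jointDensity τ a γbar μ σ lam g) /
    ∫ g in Ioi (0 : ℝ), jointDensity τ a γbar μ σ lam g

private lemma aux_cont {c p q : ℝ} :
    ContinuousOn (fun g : ℝ => g ^ c * Real.exp (-p / g - q * g)) (Ioi 0) := by
  intro x hx
  have hx0 : (0:ℝ) < x := hx
  exact ((Real.continuousAt_rpow_const x c (Or.inl hx0.ne')).mul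
    (((continuousAt_const.div continuousAt_id hx0.ne').sub
      (continuousAt_const.mul continuousAt_id)).rexp)).continuousWithinAt

private lemma aux_integrable {c p q : ℝ} (hc : -1 < c) (hp : 0 ≤ p) (hq : 0 < q) :
    IntegrableOn (fun g : ℝ => g ^ c * Real.exp (-p / g - q * g)) (Ioi 0) := by
  have h0 : IntegrableOn (fun g : ℝ => g ^ c * Real.exp (-q * g)) (Ioi 0) := by
    have := integrableOn_rpow_mul_exp_neg_mul_rpow hc zero_lt_one hq
    simpa [Real.rpow_one] using this
  refine h0.mono' (aux_cont.aestronglyMeasurable measurableSet_Ioi) ?_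
  rw [ae_restrict_iff' measurableSet_Ioi]
  filter_upwards with x hx
  have hx0 : (0:ℝ) < x := hx
  have h1 : Real.exp (-p / x - q * x) ≤ Real.exp (-q * x) := by
    apply Real.exp_le_exp.2
    have : -p / x ≤ 0 := div_nonpos_of_nonpos_of_nonneg (by linarith) hx0.le
    linarith
  rw [norm_mul, Real.norm_eq_abs, Real.norm_eq_abs, abs_of_pos (Real.exp_pos _),
    abs_of_pos (Real.rpow_pos_of_pos hx0 c)]
  exact mul_le_mul_of_nonneg_left h1 (Real.rpow_nonneg hx0.le c)

private lemma aux_deriv {p q m : ℝ} {g : ℝ} (hg : 0 < g) :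
    HasDerivAt (fun x : ℝ => x ^ (m + 1) * Real.exp (-p / x - q * x))
      (((m + 1) * g ^ m + p * g ^ (m - 1) - q * g ^ (m + 1)) * Real.exp (-p / g - q * g)) g := by
  have h1 : HasDerivAt (fun x : ℝ => x ^ (m + 1)) ((m + 1) * g ^ (m + 1 - 1)) g :=
    Real.hasDerivAt_rpow_const (Or.inl hg.ne')
  have h2 : HasDerivAt (fun x : ℝ => -p / x - q * x) (p / g ^ 2 - q) g := by
    have ha := (hasDerivAt_inv hg.ne').const_mul (-p)
    have hval : -p * -(g ^ 2)⁻¹ = p / g ^ 2 := by field_simp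
    have ha' : HasDerivAt (fun x : ℝ => -p / x) (p / g ^ 2) g := by
      simpa [div_eq_mul_inv, hval] using ha
    exact (ha'.sub ((hasDerivAt_id g).const_mul q)).congr_deriv (by simp)
  have h3 := h1.mul h2.exp
  have e1 : m + 1 - 1 = m := by ring
  rw [e1] at h3
  have e2 : g ^ (m + 1) * (p / g ^ 2) = p * g ^ (m - 1) := by
    rw [show m - 1 = m + 1 - 2 by ring, Real.rpow_sub hg, show (2:ℝ) = ((2:ℕ):ℝ) by norm_num,
      Real.rpow_natCast]
    field_simp
  refine h3.congr_deriv ?_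
  linear_combination (Real.exp (-p / g - q * g)) * e2

private lemma aux_key {p q m : ℝ} (hp : 0 < p) (hq : 0 < q) (hm : 0 < m) (hm1 : (-1:ℝ) < m - 1) :
    ∫ g in Ioi (0:ℝ),
      ((m + 1) * g ^ m + p * g ^ (m - 1) - q * g ^ (m + 1)) * Real.exp (-p / g - q * g) = 0 := by
  set f : ℝ → ℝ := fun x => x ^ (m + 1) * Real.exp (-p / x - q * x) with hf
  set f' : ℝ → ℝ := fun g =>
    ((m + 1) * g ^ m + p * g ^ (m - 1) - q * g ^ (m + 1)) * Real.exp (-p / g - q * g) with hf'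
  have hbound : ∀ x : ℝ, 0 ≤ x → ‖f x‖ ≤ x ^ (m + 1) * Real.exp (-q * x) := by
    intro x hx
    rcases hx.eq_or_lt with rfl | hx0
    · simp [hf, Real.zero_rpow (by linarith : m + 1 ≠ 0)]
    · rw [norm_mul, Real.norm_eq_abs, Real.norm_eq_abs, abs_of_pos (Real.exp_pos _),
        abs_of_pos (Real.rpow_pos_of_pos hx0 _)]
      refine mul_le_mul_of_nonneg_left (Real.exp_le_exp.2 ?_) (Real.rpow_nonneg hx0.le _)
      have : -p / x ≤ 0 := div_nonpos_of_nonpos_of_nonneg (by linarith) hx0.le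
      linarith
  have hcont : ContinuousWithinAt f (Ici 0) 0 := by
    have h0 : f 0 = 0 := by simp [hf, Real.zero_rpow (by linarith : m + 1 ≠ 0)]
    rw [ContinuousWithinAt, h0]
    apply squeeze_zero_norm' (a := fun x => x ^ (m + 1) * Real.exp (-q * x))
    · filter_upwards [self_mem_nhdsWithin] with x hx using hbound x hx
    · have h1 : Tendsto (fun x : ℝ => x ^ (m + 1)) (nhdsWithin 0 (Ici 0)) (nhds 0) := by
        have := (Real.continuousAt_rpow_const 0 (m + 1) (Or.inr (by linarith))).continuousWithinAt
          (s := Ici (0:ℝ))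
        simpa [ContinuousWithinAt, Real.zero_rpow (by linarith : m + 1 ≠ 0)] using this
      have h2 : Tendsto (fun x : ℝ => Real.exp (-q * x)) (nhdsWithin 0 (Ici 0)) (nhds 1) := by
        have hc : Continuous (fun x : ℝ => Real.exp (-q * x)) := by continuity
        have := (hc.tendsto 0).mono_left (nhdsWithin_le_nhds (s := Ici (0:ℝ)))
        simpa using this
      simpa using h1.mul h2
  have htop : Filter.Tendsto f Filter.atTop (nhds 0) := by
    apply squeeze_zero_norm' (a := fun x => x ^ (m + 1) * Real.exp (-q * x))
    · filter_upwards [Filter.eventually_ge_atTop (0:ℝ)] with x hx using hbound x hx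
    · exact tendsto_rpow_mul_exp_neg_mul_atTop_nhds_zero (m + 1) q hq
  have hint : IntegrableOn f' (Ioi 0) := by
    have i1 := (aux_integrable (by linarith : (-1:ℝ) < m) hp.le hq).const_mul (m + 1)
    have i2 := (aux_integrable hm1 hp.le hq).const_mul p
    have i3 := (aux_integrable (by linarith : (-1:ℝ) < m + 1) hp.le hq).const_mul q
    have := (i1.add i2).sub i3
    apply IntegrableOn.congr_fun this _ measurableSet_Ioi
    intro x hx
    simp only [Pi.add_apply, Pi.sub_apply, hf']
    ring
  have := integral_Ioi_of_hasDerivAt_of_tendsto hcont (fun x hx => aux_deriv hx) hint htop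
  rw [this]
  simp [hf, Real.zero_rpow (by linarith : m + 1 ≠ 0)]

/-- The identity
`E[Γ⁻¹ | Λ = λ] = ((μ² + 2σ²) E[Γ | Λ = λ] − σ²(2τa − 1)) / (λ − γ̄a)²`
for `λ ≠ γ̄a` and `τa > 3/2`. -/
theorem condMeanGammaInv_eq (τ a γbar μ σ lam : ℝ)
    (hτ : 0 < τ) (ha : 0 < a) (hτa : 3 / 2 < τ * a) (hσ : 0 < σ)
    (hlam : lam ≠ γbar * a) :
    condMeanGammaInv τ a γbar μ σ lam
      = ((μ ^ 2 + 2 * σ ^ 2) * condMeanGamma τ a γbar μ σ lam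
            - σ ^ 2 * (2 * (τ * a) - 1)) / (lam - γbar * a) ^ 2 := by
  set s : ℝ := lam - γbar * a with hs_def
  have hs : s ≠ 0 := sub_ne_zero.2 hlam
  have hσ2 : (0:ℝ) < σ ^ 2 := by positivity
  set m : ℝ := τ * a - 3/2 with hm_def
  have hm : 0 < m := by rw [hm_def]; linarith
  set p : ℝ := s ^ 2 / (2 * σ ^ 2) with hp_def
  have hp : 0 < p := by rw [hp_def]; positivity
  set q : ℝ := 1 + μ ^ 2 / (2 * σ ^ 2) with hq_def
  have hq : 0 < q := by positivity
  set C : ℝ := Real.exp (μ * s / σ ^ 2) / (Real.sqrt (2 * π * σ ^ 2) * Real.Gamma (τ * a))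
    with hC_def
  have hΓ : 0 < Real.Gamma (τ * a) := Real.Gamma_pos_of_pos (by linarith)
  have hS : (0:ℝ) < Real.sqrt (2 * π * σ ^ 2) := Real.sqrt_pos.2 (by positivity)
  have hC : 0 < C := div_pos (Real.exp_pos _) (mul_pos hS hΓ)
  have hrw : ∀ g ∈ Ioi (0:ℝ),
      jointDensity τ a γbar μ σ lam g = C * (g ^ m * Real.exp (-p / g - q * g)) := by
    intro g hg
    have hg0 : (0:ℝ) < g := hg
    have hsq : Real.sqrt (2 * π * σ ^ 2 * g) = Real.sqrt (2 * π * σ ^ 2) * Real.sqrt g :=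
      Real.sqrt_mul (by positivity) g
    have hpow : g ^ (τ * a - 1) = g ^ m * Real.sqrt g := by
      rw [Real.sqrt_eq_rpow, ← Real.rpow_add hg0, hm_def,
        show τ * a - 3/2 + (1/2 : ℝ) = τ * a - 1 by ring]
    have hexp : Real.exp (-(s - μ * g) ^ 2 / (2 * σ ^ 2 * g)) * Real.exp (-g)
        = Real.exp (μ * s / σ ^ 2) * Real.exp (-p / g - q * g) := by
      rw [← Real.exp_add, ← Real.exp_add]
      congr 1
      rw [hp_def, hq_def]
      field_simp
      ring
    have hsg : Real.sqrt g ≠ 0 := by positivity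
    rw [jointDensity, hsq, hpow, hC_def, ← hs_def]
    set S : ℝ := Real.sqrt (2 * π * σ ^ 2)
    set G : ℝ := Real.Gamma (τ * a)
    set E1 : ℝ := Real.exp (-(s - μ * g) ^ 2 / (2 * σ ^ 2 * g))
    set E2 : ℝ := Real.exp (-p / g - q * g)
    have hfrac : g ^ m * Real.sqrt g / (S * Real.sqrt g * G) = g ^ m / (S * G) := by
      rw [div_eq_div_iff (by positivity) (by positivity)]
      ring
    calc E1 / (S * Real.sqrt g) * (g ^ m * Real.sqrt g * Real.exp (-g) / G)
        = (E1 * Real.exp (-g)) * (g ^ m * Real.sqrt g / (S * Real.sqrt g * G)) := by ring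
      _ = (E1 * Real.exp (-g)) * (g ^ m / (S * G)) := by rw [hfrac]
      _ = (Real.exp (μ * s / σ ^ 2) * E2) * (g ^ m / (S * G)) := by rw [hexp]
      _ = Real.exp (μ * s / σ ^ 2) / (S * G) * (g ^ m * E2) := by ring
  have hden : (∫ g in Ioi (0:ℝ), jointDensity τ a γbar μ σ lam g)
      = C * ∫ g in Ioi (0:ℝ), g ^ m * Real.exp (-p / g - q * g) := by
    rw [← integral_const_mul]
    exact setIntegral_congr_fun measurableSet_Ioi hrw
  have hnum1 : (∫ g in Ioi (0:ℝ), g * jointDensity τ a γbar μ σ lam g)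
      = C * ∫ g in Ioi (0:ℝ), g ^ (m + 1) * Real.exp (-p / g - q * g) := by
    rw [← integral_const_mul]
    refine setIntegral_congr_fun measurableSet_Ioi (fun g hg => ?_)
    have hg0 : (0:ℝ) < g := hg
    rw [hrw g hg, Real.rpow_add_one hg0.ne']
    ring
  have hnuminv : (∫ g in Ioi (0:ℝ), g⁻¹ * jointDensity τ a γbar μ σ lam g)
      = C * ∫ g in Ioi (0:ℝ), g ^ (m - 1) * Real.exp (-p / g - q * g) := by
    rw [← integral_const_mul]
    refine setIntegral_congr_fun measurableSet_Ioi (fun g hg => ?_)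
    have hg0 : (0:ℝ) < g := hg
    rw [hrw g hg, Real.rpow_sub_one hg0.ne']
    field_simp
  set Im : ℝ := ∫ g in Ioi (0:ℝ), g ^ m * Real.exp (-p / g - q * g) with hIm_def
  set Ip : ℝ := ∫ g in Ioi (0:ℝ), g ^ (m + 1) * Real.exp (-p / g - q * g) with hIp_def
  set Iminus : ℝ := ∫ g in Ioi (0:ℝ), g ^ (m - 1) * Real.exp (-p / g - q * g) with hIminus_def
  have hIm_pos : 0 < Im := by
    rw [hIm_def]
    refine (setIntegral_pos_iff_support_of_nonneg_ae ?_ ?_).2 ?_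
    · filter_upwards [ae_restrict_mem measurableSet_Ioi] with x hx
      have : (0:ℝ) < x := hx
      positivity
    · exact aux_integrable (by linarith) hp.le hq
    · have hsub : Ioi (0:ℝ) ⊆ Function.support fun g => g ^ m * Real.exp (-p / g - q * g) := by
        intro x hx
        have hx0 : (0:ℝ) < x := hx
        exact ne_of_gt (by positivity)
      have : Function.support (fun g : ℝ => g ^ m * Real.exp (-p / g - q * g)) ∩ Ioi 0
          = Ioi 0 := inter_eq_self_of_subset_right hsub
      rw [this, Real.volume_Ioi]
      simp
  have hkey : (m + 1) * Im + p * Iminus - q * Ip = 0 := by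
    have h0 := aux_key hp hq hm (by rw [hm_def]; linarith)
    have hcongr : EqOn
        (fun g : ℝ => ((m + 1) * g ^ m + p * g ^ (m - 1) - q * g ^ (m + 1)) *
          Real.exp (-p / g - q * g))
        (fun g : ℝ => (m + 1) * (g ^ m * Real.exp (-p / g - q * g))
          + p * (g ^ (m - 1) * Real.exp (-p / g - q * g))
          - q * (g ^ (m + 1) * Real.exp (-p / g - q * g))) (Ioi 0) := by
      intro g hg; ring
    rw [setIntegral_congr_fun measurableSet_Ioi hcongr] at h0
    have i1 := (aux_integrable (by linarith : (-1:ℝ) < m) hp.le hq).const_mul (m + 1)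
    have i2 := (aux_integrable (by rw [hm_def]; linarith : (-1:ℝ) < m - 1) hp.le hq).const_mul p
    have i3 := (aux_integrable (by linarith : (-1:ℝ) < m + 1) hp.le hq).const_mul q
    have i12 : IntegrableOn (fun g : ℝ => (m + 1) * (g ^ m * Real.exp (-p / g - q * g))
        + p * (g ^ (m - 1) * Real.exp (-p / g - q * g))) (Ioi 0) := i1.add i2
    have i1' : IntegrableOn (fun g : ℝ => (m + 1) * (g ^ m * Real.exp (-p / g - q * g)))
        (Ioi 0) := i1
    have i2' : IntegrableOn (fun g : ℝ => p * (g ^ (m - 1) * Real.exp (-p / g - q * g)))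
        (Ioi 0) := i2
    have i3' : IntegrableOn (fun g : ℝ => q * (g ^ (m + 1) * Real.exp (-p / g - q * g)))
        (Ioi 0) := i3
    rw [integral_sub i12 i3', integral_add i1' i2', integral_const_mul, integral_const_mul,
      integral_const_mul] at h0
    rw [hIm_def, hIp_def, hIminus_def]
    linarith [h0]
  have hkey2 : σ ^ 2 * (2 * (τ * a) - 1) * Im + s ^ 2 * Iminus = (2 * σ ^ 2 + μ ^ 2) * Ip := by
    have e1 : 2 * σ ^ 2 * p = s ^ 2 := by rw [hp_def]; field_simp
    have e2 : 2 * σ ^ 2 * q = 2 * σ ^ 2 + μ ^ 2 := by rw [hq_def]; field_simp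
    have e3 : m + 1 = τ * a - 1/2 := by rw [hm_def]; ring
    linear_combination (2 * σ ^ 2) * hkey - Iminus * e1 + Ip * e2 - (2 * σ ^ 2 * Im) * e3
  rw [condMeanGammaInv, condMeanGamma, hnum1, hnuminv, hden]
  rw [mul_div_mul_left Iminus Im hC.ne', mul_div_mul_left Ip Im hC.ne']
  have hs2 : s ^ 2 ≠ 0 := pow_ne_zero 2 hs
  have hImne : Im ≠ 0 := hIm_pos.ne'
  rw [div_eq_div_iff hImne hs2]
  field_simp
  linear_combination hkey2
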